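/- arXiv:1608.07968 — 4 statements merged into one kernel-verified Lean document; each statement's English description precedes it below -/
import Mathlib

section
/- Let $n_1, n_2$ be positive integers and set $c = 1$. Any real solution $x$ of $\phi(x) = 0$, where $\phi(x) = \left[\tfrac{1}{n_1}x^2 + \tfrac{1}{n_2}\left(\tfrac{2n_1+2n_2+2-n_1 x}{n_2}\right)^2\right](x-2) - \tfrac{2}{n_1^2}x^2$, satisfies $2 \le x \le 2 + \tfrac{2}{n_1}$. -/
noncomputable def phi (n1 n2 : ℕ) (c : ℝ) (x : ℝ) : ℝ :=
  ((1 / (n1 : ℝ)) * x ^ 2 +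
      (c / (n2 : ℝ)) * ((2 * (n1 : ℝ) + 2 * (n2 : ℝ) + 2 - (n1 : ℝ) * x) / (n2 : ℝ)) ^ 2) *
    (x - 2) - (2 / (n1 : ℝ) ^ 2) * x ^ 2

theorem phi_root_location (n1 n2 : ℕ) (hn1 : 0 < n1) (hn2 : 0 < n2) (x : ℝ)
    (hx : phi n1 n2 1 x = 0) : 2 ≤ x ∧ x ≤ 2 + 2 / (n1 : ℝ) := by
  have ha : (0:ℝ) < n1 := by exact_mod_cast hn1
  have hb : (0:ℝ) < n2 := by exact_mod_cast hn2
  have ha1 : (1:ℝ) ≤ n1 := by exact_mod_cast hn1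
  unfold phi at hx
  set Q : ℝ := (2 * (n1 : ℝ) + 2 * (n2 : ℝ) + 2 - (n1 : ℝ) * x) / (n2 : ℝ) with hQ
  have hQ2 : 0 ≤ Q ^ 2 := sq_nonneg Q
  have hx0 : x ≠ 0 := by
    intro h
    subst h
    have hQpos : 0 < Q := by
      rw [hQ]
      apply div_pos _ hb
      nlinarith
    have h1 : 0 < (1 / (n2:ℝ)) * Q ^ 2 := by positivity
    nlinarith [hx]
  have hx2 : 0 < x ^ 2 := by positivity
  have key : ((1 / (n1:ℝ)) * x ^ 2 + (1 / (n2:ℝ)) * Q ^ 2) * (x - 2)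
      = (2 / (n1:ℝ) ^ 2) * x ^ 2 := by linarith [hx]
  have hApos : 0 < (1 / (n1:ℝ)) * x ^ 2 := by positivity
  have hQt : 0 ≤ (1 / (n2:ℝ)) * Q ^ 2 := by positivity
  have hrhs : 0 < (2 / (n1:ℝ) ^ 2) * x ^ 2 := by positivity
  have hlow : 2 < x := by
    by_contra h
    push_neg at h
    nlinarith
  constructor
  · linarith
  · have h2 : (1 / (n1:ℝ)) * x ^ 2 * (x - 2) ≤ (2 / (n1:ℝ) ^ 2) * x ^ 2 := by
      nlinarith
    have hn1ne : (n1:ℝ) ≠ 0 := ne_of_gt ha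
    have h3 : x - 2 ≤ 2 / (n1:ℝ) := by
      rw [le_div_iff₀ ha]
      have h2' : x ^ 2 * (x - 2) * (n1:ℝ) ≤ 2 * x ^ 2 := by
        have h4 := mul_le_mul_of_nonneg_right h2 (le_of_lt (mul_pos ha ha))
        calc x ^ 2 * (x - 2) * (n1:ℝ)
            = 1 / (n1:ℝ) * x ^ 2 * (x - 2) * ((n1:ℝ) * (n1:ℝ)) := by field_simp
          _ ≤ 2 / (n1:ℝ) ^ 2 * x ^ 2 * ((n1:ℝ) * (n1:ℝ)) := h4
          _ = 2 * x ^ 2 := by field_simp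
      nlinarith [mul_pos hx2 ha]
    linarith
end

section
/- Let $n_1, n_2$ be positive real numbers with $n_1 \ge 3$ and $\tfrac{n_1}{\sqrt 2} \le n_2 \le n_1$. Then $d := n_1^6 + n_2^6 + 2 n_1^6 n_2 + 2 n_2^6 n_1 + n_1^6 n_2^2 + n_1^2 n_2^6 + n_1^3 n_2^3 - (8 n_1^4 n_2^4 + 3 n_1^3 n_2^5 + 3 n_1^5 n_2^3 + 2 n_1^3 n_2^4 + 2 n_1^4 n_2^3) < 0$. -/
theorem discriminant_neg (n1 n2 : ℝ) (hn1 : 3 ≤ n1) (hlo : n1 / Real.sqrt 2 ≤ n2)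
    (hhi : n2 ≤ n1) :
    n1 ^ 6 + n2 ^ 6 + 2 * n1 ^ 6 * n2 + 2 * n2 ^ 6 * n1 + n1 ^ 6 * n2 ^ 2 +
        n1 ^ 2 * n2 ^ 6 + n1 ^ 3 * n2 ^ 3 -
      (8 * n1 ^ 4 * n2 ^ 4 + 3 * n1 ^ 3 * n2 ^ 5 + 3 * n1 ^ 5 * n2 ^ 3 +
        2 * n1 ^ 3 * n2 ^ 4 + 2 * n1 ^ 4 * n2 ^ 3) < 0 := by
  have hs : Real.sqrt 2 > 0 := by positivity
  have h1 : n1 ≤ Real.sqrt 2 * n2 := by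
    rw [div_le_iff₀ hs] at hlo; linarith
  have h2 : n1 ^ 2 ≤ 2 * n2 ^ 2 := by
    have hsq : Real.sqrt 2 * Real.sqrt 2 = 2 := Real.mul_self_sqrt (by norm_num)
    nlinarith [mul_self_le_mul_self (by linarith : (0:ℝ) ≤ n1) h1]
  have hn2 : (0:ℝ) < n2 := by nlinarith
  have hb : 2 ≤ n2 := by nlinarith [h2, hn1, mul_pos hn2 hn2]
  have g2 : (0:ℝ) ≤ n1 - n2 := by linarith
  have g3 : (0:ℝ) ≤ 2 * n2 ^ 2 - n1 ^ 2 := by linarith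
  have g4 : (0:ℝ) ≤ n2 - 2 := by linarith
  have hn1p : (0:ℝ) < n1 := by linarith
  nlinarith [mul_nonneg (mul_nonneg g3 (pow_pos hn1p 2).le) (pow_pos hn2 2).le,
    mul_nonneg (mul_nonneg g3 (pow_pos hn1p 4).le) (le_of_lt hn2),
    mul_nonneg (mul_nonneg g3 (pow_pos hn1p 3).le) (le_of_lt hn2),
    mul_nonneg (mul_nonneg g3 (pow_pos hn1p 4).le) (by norm_num : (0:ℝ) ≤ 1),
    mul_nonneg (mul_nonneg g2 (pow_pos hn2 4).le) (le_of_lt hn1p),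
    mul_nonneg (mul_nonneg g2 (pow_pos hn2 5).le) (by norm_num : (0:ℝ) ≤ 1),
    mul_nonneg (mul_nonneg g4 (pow_pos hn1p 4).le) (le_of_lt hn2),
    mul_nonneg (mul_nonneg g4 (pow_pos hn1p 3).le) (pow_pos hn2 2).le,
    mul_nonneg (mul_nonneg g4 (pow_pos hn1p 2).le) (pow_pos hn2 3).le,
    mul_nonneg (mul_nonneg g4 (le_of_lt hn1p)) (pow_pos hn2 4).le,
    mul_nonneg (mul_nonneg g2 (pow_pos hn1p 2).le) (pow_pos hn2 3).le,
    mul_nonneg (mul_nonneg g2 (pow_pos hn1p 3).le) (pow_pos hn2 2).le,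
    mul_pos (pow_pos hn1p 3) (pow_pos hn2 3),
    mul_pos (pow_pos hn1p 4) (pow_pos hn2 2)]
end

section
/- For $n_1 = n_2 = 1$ and $c = 1$, the cubic polynomial $\phi(x) = \left[x^2 + (6 - x)^2\right](x-2) - 2x^2$ has exactly one real root. -/
theorem calabi_eckmann_unique_root :
    ∃! x : ℝ, (x ^ 2 + (6 - x) ^ 2) * (x - 2) - 2 * x ^ 2 = 0 := by
  use 3
  constructor
  · norm_num
  · intro y hy
    have h : (y - 3) * ((y - 3) ^ 2 + 3) = 0 := by linear_combination hy / 2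
    have hpos : (y - 3) ^ 2 + 3 > 0 := by positivity
    have := mul_eq_zero.mp h
    rcases this with h1 | h2
    · linarith
    · linarith
end

section
/- Let $n_1, n_2 \ge 1$ and $c > 0$. The system of equations in $(x,y,z) \in \mathbb{R}^3$ given by $z = \tfrac{1}{n_1}x^2 + \tfrac{c}{n_2}y^2$, $z(x-2) = \tfrac{2}{n_1^2}x^2$, $z(y-2) = \tfrac{2c}{n_2^2}y^2$ with $z \ne 0$ is equivalent to the system $z = \tfrac{1}{n_1}x^2 + \tfrac{c}{n_2}y^2$, $z(x-2) = \tfrac{2}{n_1^2}x^2$, $n_1 x + n_2 y = 2n_1 + 2n_2 + 2$. -/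
theorem system_reduction (n1 n2 : ℕ) (hn1 : 1 ≤ n1) (hn2 : 1 ≤ n2) (c : ℝ) (hc : 0 < c)
    (x y z : ℝ) (hz : z ≠ 0) :
    (z = (1 / (n1 : ℝ)) * x ^ 2 + (c / (n2 : ℝ)) * y ^ 2 ∧
        z * (x - 2) = (2 / (n1 : ℝ) ^ 2) * x ^ 2 ∧
        z * (y - 2) = (2 * c / (n2 : ℝ) ^ 2) * y ^ 2) ↔
      (z = (1 / (n1 : ℝ)) * x ^ 2 + (c / (n2 : ℝ)) * y ^ 2 ∧
        z * (x - 2) = (2 / (n1 : ℝ) ^ 2) * x ^ 2 ∧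
        (n1 : ℝ) * x + (n2 : ℝ) * y = 2 * (n1 : ℝ) + 2 * (n2 : ℝ) + 2) := by
  have h1 : (n1 : ℝ) ≠ 0 := by positivity
  have h2 : (n2 : ℝ) ≠ 0 := by positivity
  constructor
  · rintro ⟨e1, e2, e3⟩
    refine ⟨e1, e2, ?_⟩
    field_simp at e1 e2 e3
    have key : z * ((n1 : ℝ) * x + n2 * y - (2 * n1 + 2 * n2 + 2)) = 0 := by
      refine mul_left_cancel₀ (mul_ne_zero h1 h2) ?_
      linear_combination (n2 : ℝ) * e2 + (n1 : ℝ) * e3 - 2 * e1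
    rcases mul_eq_zero.mp key with h | h
    · exact absurd h hz
    · linarith
  · rintro ⟨e1, e2, e3⟩
    refine ⟨e1, e2, ?_⟩
    field_simp at e1 e2 ⊢
    have key : z * ((n1 : ℝ) * x + n2 * y - (2 * n1 + 2 * n2 + 2)) = 0 := by
      rw [e3]; ring
    refine mul_left_cancel₀ h1 ?_
    linear_combination (2 : ℝ) * e1 - (n2 : ℝ) * e2 + (n1 : ℝ) * n2 * key
end
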